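/- Let ρ_{AB} = (1/2)(|0⟩⟨0|_A ⊗ ρ'_B + |1⟩⟨1|_A ⊗ ρ''_B) be a classical-quantum state with A a qubit. Then C_A^{(2)}(ρ_{AB}) = ‖ρ'_B − ρ''_B‖_1 / 4: among all two-outcome POVMs on A with outcome probabilities 1/2 on ρ_A, the optimal one is the projective measurement in the {|0⟩,|1⟩} basis, and if P_{A,1} has diagonal elements λ, η in this basis (with λ + η = 1 forced by the maximal-entropy condition), the induced output states satisfy ‖ρ_{B,1} − ρ_{B,2}‖_1 = |λ − η| · ‖ρ'_B − ρ''_B‖_1 ≤ ‖ρ'_B − ρ''_B‖_1. -/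

import Mathlib

open Matrix BigOperators ComplexOrder Kronecker

def IsDensity {n : Type*} [Fintype n] [DecidableEq n] (ρ : Matrix n n ℂ) : Prop :=
  ρ.PosSemidef ∧ ρ.trace = 1

noncomputable def traceNorm {d : ℕ} (A : Matrix (Fin d) (Fin d) ℂ) : ℝ :=
  if h : A.IsHermitian then ∑ i, |h.eigenvalues i| else 0

noncomputable def ptraceA {dA dB : ℕ}
    (M : Matrix (Fin dA × Fin dB) (Fin dA × Fin dB) ℂ) : Matrix (Fin dB) (Fin dB) ℂ :=
  Matrix.of fun i j => ∑ a, M (a, i) (a, j)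

/-- The correlation measure `C_A^{(2)}`: the supremum, over two-outcome POVMs on `A`
that are maximally entropic for `ρ` (both outcome probabilities equal `1/2`), of a
quarter of the trace distance of the two post-measurement states on `B`. -/
noncomputable def CA2 {dA dB : ℕ}
    (ρ : Matrix (Fin dA × Fin dB) (Fin dA × Fin dB) ℂ) : ℝ :=
  sSup { x : ℝ | ∃ P₁ P₂ : Matrix (Fin dA) (Fin dA) ℂ,
    P₁.PosSemidef ∧ P₂.PosSemidef ∧ P₁ + P₂ = 1 ∧
    (ρ * (P₁ ⊗ₖ (1 : Matrix (Fin dB) (Fin dB) ℂ))).trace = 1/2 ∧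
    (ρ * (P₂ ⊗ₖ (1 : Matrix (Fin dB) (Fin dB) ℂ))).trace = 1/2 ∧
    x = traceNorm ((2 : ℂ) • ptraceA (ρ * (P₁ ⊗ₖ (1 : Matrix (Fin dB) (Fin dB) ℂ)))
          - (2 : ℂ) • ptraceA (ρ * (P₂ ⊗ₖ (1 : Matrix (Fin dB) (Fin dB) ℂ)))) / 4 }

section Aux

open Polynomial

variable {n : Type*} [Fintype n] [DecidableEq n]

lemma CA2aux_charmatrix_diagonal (d : n → ℂ) :
    charmatrix (diagonal d) = diagonal fun i => (X : ℂ[X]) - C (d i) := by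
  ext i j
  by_cases h : i = j
  · subst h; simp [charmatrix_apply_eq]
  · simp [charmatrix_apply_ne _ _ _ h, diagonal_apply_ne _ h]

lemma CA2aux_charpoly_diagonal (d : n → ℂ) :
    (diagonal d).charpoly = ∏ i, ((X : ℂ[X]) - C (d i)) := by
  rw [Matrix.charpoly, CA2aux_charmatrix_diagonal, det_diagonal]

lemma CA2aux_charpoly_unitary_conj (U B : Matrix n n ℂ) (hU : U ∈ Matrix.unitaryGroup n ℂ) :
    (U * B * star U).charpoly = B.charpoly := by
  have hUU : U * star U = 1 := Matrix.mem_unitaryGroup_iff.mp hU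
  have hmapUU : U.map C * (star U).map C = 1 := by
    rw [← Matrix.map_mul, hUU, Matrix.map_one _ (map_zero C) (map_one C)]
  have hcomm : U.map C * Matrix.scalar n (X : ℂ[X]) = Matrix.scalar n (X : ℂ[X]) * U.map C :=
    (Matrix.scalar_commute (X : ℂ[X]) (fun r' => Commute.all _ _) (U.map C)).symm
  have hmap : charmatrix (U * B * star U) = U.map C * charmatrix B * (star U).map C := by
    unfold charmatrix
    rw [mul_sub, sub_mul, hcomm, mul_assoc ((Matrix.scalar n) (X : ℂ[X])), hmapUU, mul_one]
    congr 1
    simp [RingHom.mapMatrix_apply, Matrix.map_mul, mul_assoc]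
  rw [Matrix.charpoly, hmap, det_mul, det_mul, Matrix.charpoly]
  have h1 : (U.map C).det * ((star U).map C).det = 1 := by
    rw [← det_mul, hmapUU, det_one]
  calc (U.map C).det * (charmatrix B).det * ((star U).map C).det
      = (U.map C).det * ((star U).map C).det * (charmatrix B).det := by ring
    _ = (charmatrix B).det := by rw [h1, one_mul]

lemma CA2aux_charpoly_roots_of_unitary_diag {A U : Matrix n n ℂ}
    (hU : U ∈ Matrix.unitaryGroup n ℂ)
    (f : n → ℝ) (hA : A = U * diagonal (fun i => (f i : ℂ)) * star U) :
    A.charpoly.roots = Finset.univ.val.map (fun i => (f i : ℂ)) := by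
  rw [hA, CA2aux_charpoly_unitary_conj _ _ hU, CA2aux_charpoly_diagonal]
  have h : ∏ i, ((X : ℂ[X]) - C ((f i : ℂ)))
      = ((Finset.univ.val.map (fun i => (f i : ℂ))).map (fun a => (X : ℂ[X]) - C a)).prod := by
    rw [Multiset.map_map]
    rfl
  rw [h, Polynomial.roots_multiset_prod_X_sub_C]

lemma CA2aux_sum_abs_eig_eq {A : Matrix n n ℂ} (hA : A.IsHermitian)
    {U : Matrix n n ℂ} (hU : U ∈ Matrix.unitaryGroup n ℂ) (f : n → ℝ)
    (hAU : A = U * diagonal (fun i => (f i : ℂ)) * star U) :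
    ∑ i, |hA.eigenvalues i| = ∑ i, |f i| := by
  have h1 : A.charpoly.roots = Finset.univ.val.map (fun i => (f i : ℂ)) :=
    CA2aux_charpoly_roots_of_unitary_diag hU f hAU
  have h2 : A.charpoly.roots = Finset.univ.val.map (fun i => (hA.eigenvalues i : ℂ)) := by
    refine CA2aux_charpoly_roots_of_unitary_diag (hA.eigenvectorUnitary).2 hA.eigenvalues ?_
    exact hA.spectral_theorem
  have key : Finset.univ.val.map (fun i => (hA.eigenvalues i : ℂ))
      = Finset.univ.val.map (fun i => (f i : ℂ)) := by rw [← h2, h1]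
  have lift : ∀ g : n → ℝ, ((Finset.univ.val.map (fun i => ((g i : ℂ)))).map
      (fun z => |z.re|)).sum = ∑ i, |g i| := by
    intro g
    rw [Multiset.map_map]
    simp only [Function.comp_apply, Complex.ofReal_re]
    rfl
  rw [← lift, ← lift, key]

end Aux

lemma CA2aux_isHermitian_real_smul {d : ℕ} (c : ℝ) {A : Matrix (Fin d) (Fin d) ℂ}
    (hA : A.IsHermitian) : ((c : ℂ) • A).IsHermitian := by
  unfold Matrix.IsHermitian
  rw [conjTranspose_smul, hA.eq]
  simp

lemma CA2aux_traceNorm_real_smul {d : ℕ} (c : ℝ) (A : Matrix (Fin d) (Fin d) ℂ)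
    (hA : A.IsHermitian) :
    traceNorm ((c : ℂ) • A) = |c| * traceNorm A := by
  have hcA := CA2aux_isHermitian_real_smul c hA
  rw [traceNorm, traceNorm, dif_pos hA, dif_pos hcA]
  have hdiag : (c : ℂ) • A = (hA.eigenvectorUnitary : Matrix (Fin d) (Fin d) ℂ)
      * Matrix.diagonal (fun i => ((c * hA.eigenvalues i : ℝ) : ℂ))
      * star (hA.eigenvectorUnitary : Matrix (Fin d) (Fin d) ℂ) := by
    conv_lhs => rw [hA.spectral_theorem]
    rw [Unitary.conjStarAlgAut_apply, ← smul_mul_assoc, ← mul_smul_comm]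
    congr 2
    ext i j
    by_cases h : i = j
    · subst h; simp [Matrix.diagonal, Complex.ofReal_mul]
    · simp [Matrix.diagonal_apply_ne _ h]
  rw [CA2aux_sum_abs_eig_eq hcA (hA.eigenvectorUnitary).2 _ hdiag]
  rw [Finset.mul_sum]
  congr 1
  funext i
  rw [abs_mul]

lemma CA2aux_traceNorm_nonneg {d : ℕ} (A : Matrix (Fin d) (Fin d) ℂ) : 0 ≤ traceNorm A := by
  rw [traceNorm]
  split
  · exact Finset.sum_nonneg fun i _ => abs_nonneg _
  · exact le_refl 0

lemma CA2aux_psd_diag_nonneg {n : Type*} [Fintype n] [DecidableEq n] {P : Matrix n n ℂ}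
    (h : P.PosSemidef) (i : n) : 0 ≤ P i i := by
  exact h.diag_nonneg

lemma CA2aux_ptraceA_formula {dB : ℕ} (ρ' ρ'' : Matrix (Fin dB) (Fin dB) ℂ)
    (P : Matrix (Fin 2) (Fin 2) ℂ) :
    ptraceA (((1/2 : ℂ) • (Matrix.single (0 : Fin 2) 0 (1 : ℂ) ⊗ₖ ρ'
        + Matrix.single (1 : Fin 2) 1 (1 : ℂ) ⊗ₖ ρ''))
        * (P ⊗ₖ (1 : Matrix (Fin dB) (Fin dB) ℂ)))
      = (1/2 : ℂ) • (P 0 0 • ρ' + P 1 1 • ρ'') := by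
  ext i j
  simp only [ptraceA, Matrix.of_apply, Matrix.mul_apply, Matrix.smul_apply, Matrix.add_apply,
    Matrix.kroneckerMap_apply, Fintype.sum_prod_type, Matrix.single, Matrix.of_apply,
    Matrix.one_apply, Fin.sum_univ_two]
  simp [Finset.mul_sum, Finset.sum_ite_eq', mul_comm]
  ring

lemma CA2aux_trace_eq_trace_ptraceA {dA dB : ℕ}
    (M : Matrix (Fin dA × Fin dB) (Fin dA × Fin dB) ℂ) :
    M.trace = (ptraceA M).trace := by
  simp only [Matrix.trace, Matrix.diag, ptraceA, Matrix.of_apply, Fintype.sum_prod_type]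
  exact Finset.sum_comm

/-- For the classical-quantum state
`ρ_{AB} = (1/2)(|0⟩⟨0|_A ⊗ ρ'_B + |1⟩⟨1|_A ⊗ ρ''_B)` with a qubit ancilla `A`:
every maximally entropic two-outcome POVM on `A` with diagonal elements
`λ = P₁ 0 0`, `η = P₁ 1 1` satisfies `λ + η = 1` and gives output states with
`‖ρ_{B,1} - ρ_{B,2}‖₁ = |λ - η| ⬝ ‖ρ'_B - ρ''_B‖₁ ≤ ‖ρ'_B - ρ''_B‖₁`; consequently
`C_A^{(2)}(ρ_{AB}) = ‖ρ'_B - ρ''_B‖₁ / 4`, the optimum being the projective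
measurement in the `{|0⟩, |1⟩}` basis. -/
theorem CA2_classical_quantum (dB : ℕ)
    (ρ' ρ'' : Matrix (Fin dB) (Fin dB) ℂ)
    (h' : IsDensity ρ') (h'' : IsDensity ρ'') :
    let ρAB : Matrix (Fin 2 × Fin dB) (Fin 2 × Fin dB) ℂ :=
      (1/2 : ℂ) • (Matrix.single (0 : Fin 2) 0 (1 : ℂ) ⊗ₖ ρ'
        + Matrix.single (1 : Fin 2) 1 (1 : ℂ) ⊗ₖ ρ'')
    (∀ P₁ P₂ : Matrix (Fin 2) (Fin 2) ℂ,
      P₁.PosSemidef → P₂.PosSemidef → P₁ + P₂ = 1 →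
      (ρAB * (P₁ ⊗ₖ (1 : Matrix (Fin dB) (Fin dB) ℂ))).trace = 1/2 →
      (ρAB * (P₂ ⊗ₖ (1 : Matrix (Fin dB) (Fin dB) ℂ))).trace = 1/2 →
      P₁ 0 0 + P₁ 1 1 = 1 ∧
      traceNorm ((2 : ℂ) • ptraceA (ρAB * (P₁ ⊗ₖ (1 : Matrix (Fin dB) (Fin dB) ℂ)))
          - (2 : ℂ) • ptraceA (ρAB * (P₂ ⊗ₖ (1 : Matrix (Fin dB) (Fin dB) ℂ))))
        = ‖P₁ 0 0 - P₁ 1 1‖ * traceNorm (ρ' - ρ'') ∧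
      traceNorm ((2 : ℂ) • ptraceA (ρAB * (P₁ ⊗ₖ (1 : Matrix (Fin dB) (Fin dB) ℂ)))
          - (2 : ℂ) • ptraceA (ρAB * (P₂ ⊗ₖ (1 : Matrix (Fin dB) (Fin dB) ℂ))))
        ≤ traceNorm (ρ' - ρ'')) ∧
    CA2 ρAB = traceNorm (ρ' - ρ'') / 4 := by
  intro ρAB
  have hρ : ρAB = (1/2 : ℂ) • (Matrix.single (0 : Fin 2) 0 (1 : ℂ) ⊗ₖ ρ'
        + Matrix.single (1 : Fin 2) 1 (1 : ℂ) ⊗ₖ ρ'') := rfl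
  have hHerm : (ρ' - ρ'').IsHermitian := h'.1.1.sub h''.1.1
  -- trace formula
  have htr : ∀ P : Matrix (Fin 2) (Fin 2) ℂ,
      (ρAB * (P ⊗ₖ (1 : Matrix (Fin dB) (Fin dB) ℂ))).trace
        = (1/2 : ℂ) * (P 0 0 + P 1 1) := by
    intro P
    rw [CA2aux_trace_eq_trace_ptraceA, hρ, CA2aux_ptraceA_formula ρ' ρ'' P]
    rw [Matrix.trace_smul, Matrix.trace_add, Matrix.trace_smul, Matrix.trace_smul,
      h'.2, h''.2]
    simp [smul_eq_mul]
  -- the main per-POVM statement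
  have main : ∀ P₁ P₂ : Matrix (Fin 2) (Fin 2) ℂ,
      P₁.PosSemidef → P₂.PosSemidef → P₁ + P₂ = 1 →
      (ρAB * (P₁ ⊗ₖ (1 : Matrix (Fin dB) (Fin dB) ℂ))).trace = 1/2 →
      (ρAB * (P₂ ⊗ₖ (1 : Matrix (Fin dB) (Fin dB) ℂ))).trace = 1/2 →
      P₁ 0 0 + P₁ 1 1 = 1 ∧
      traceNorm ((2 : ℂ) • ptraceA (ρAB * (P₁ ⊗ₖ (1 : Matrix (Fin dB) (Fin dB) ℂ)))
          - (2 : ℂ) • ptraceA (ρAB * (P₂ ⊗ₖ (1 : Matrix (Fin dB) (Fin dB) ℂ))))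
        = ‖P₁ 0 0 - P₁ 1 1‖ * traceNorm (ρ' - ρ'') ∧
      traceNorm ((2 : ℂ) • ptraceA (ρAB * (P₁ ⊗ₖ (1 : Matrix (Fin dB) (Fin dB) ℂ)))
          - (2 : ℂ) • ptraceA (ρAB * (P₂ ⊗ₖ (1 : Matrix (Fin dB) (Fin dB) ℂ))))
        ≤ traceNorm (ρ' - ρ'') := by
    intro P₁ P₂ hP₁ hP₂ hsum ht1 _ht2
    have hentry : P₁ 0 0 + P₁ 1 1 = 1 := by
      have h := htr P₁
      rw [ht1] at h
      linear_combination -2 * h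
    have hP2eq : P₂ = 1 - P₁ := eq_sub_of_add_eq' hsum
    -- realness of the diagonal entries
    obtain ⟨hre0, him0⟩ := Complex.nonneg_iff.mp (CA2aux_psd_diag_nonneg hP₁ 0)
    set t : ℝ := (P₁ 0 0).re with ht
    have hl0 : P₁ 0 0 = (t : ℂ) := Complex.ext (by simp [ht]) (by simp [ht, ← him0])
    have hl1 : P₁ 1 1 = 1 - (t : ℂ) := by rw [← hl0]; linear_combination hentry
    -- bound on t
    have ht0 : 0 ≤ t := hre0
    have ht1' : t ≤ 1 := by
      have h00 : 0 ≤ P₂ 0 0 := CA2aux_psd_diag_nonneg hP₂ 0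
      rw [hP2eq] at h00
      have : 0 ≤ ((1 : Matrix (Fin 2) (Fin 2) ℂ) - P₁) 0 0 := h00
      rw [Matrix.sub_apply, Matrix.one_apply_eq, hl0] at this
      obtain ⟨hr, _⟩ := Complex.nonneg_iff.mp this
      simp at hr
      linarith
    -- the difference matrix
    have hD : (2 : ℂ) • ptraceA (ρAB * (P₁ ⊗ₖ (1 : Matrix (Fin dB) (Fin dB) ℂ)))
          - (2 : ℂ) • ptraceA (ρAB * (P₂ ⊗ₖ (1 : Matrix (Fin dB) (Fin dB) ℂ)))
        = ((2*t - 1 : ℝ) : ℂ) • (ρ' - ρ'') := by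
      rw [hρ, CA2aux_ptraceA_formula ρ' ρ'' P₁, CA2aux_ptraceA_formula ρ' ρ'' P₂, hP2eq]
      ext i j
      simp only [Matrix.sub_apply, Matrix.smul_apply, Matrix.add_apply, Matrix.one_apply_eq,
        smul_eq_mul]
      rw [hl0, hl1]
      push_cast
      ring
    have habs : ‖P₁ 0 0 - P₁ 1 1‖ = |2*t - 1| := by
      rw [hl0, hl1]
      have : (t : ℂ) - (1 - (t : ℂ)) = ((2*t - 1 : ℝ) : ℂ) := by push_cast; ring
      rw [this, Complex.norm_real, Real.norm_eq_abs]
    refine ⟨hentry, ?_, ?_⟩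
    · rw [hD, CA2aux_traceNorm_real_smul _ _ hHerm, habs]
    · rw [hD, CA2aux_traceNorm_real_smul _ _ hHerm]
      have hb : |2*t - 1| ≤ 1 := by
        rw [abs_le]; constructor <;> linarith
      calc |2*t - 1| * traceNorm (ρ' - ρ'')
          ≤ 1 * traceNorm (ρ' - ρ'') :=
            mul_le_mul_of_nonneg_right hb (CA2aux_traceNorm_nonneg _)
        _ = traceNorm (ρ' - ρ'') := one_mul _
  refine ⟨main, ?_⟩
  -- the supremum computation
  have htn : 0 ≤ traceNorm (ρ' - ρ'') := CA2aux_traceNorm_nonneg _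
  rw [CA2]
  apply le_antisymm
  · apply Real.sSup_le
    · rintro x ⟨P₁, P₂, hP₁, hP₂, hsum, ht1, ht2, hx⟩
      obtain ⟨_, _, hle⟩ := main P₁ P₂ hP₁ hP₂ hsum ht1 ht2
      rw [hx]
      linarith
    · linarith
  · -- membership of the optimal value
    have hmem : traceNorm (ρ' - ρ'') / 4 ∈ { x : ℝ | ∃ P₁ P₂ : Matrix (Fin 2) (Fin 2) ℂ,
        P₁.PosSemidef ∧ P₂.PosSemidef ∧ P₁ + P₂ = 1 ∧
        (ρAB * (P₁ ⊗ₖ (1 : Matrix (Fin dB) (Fin dB) ℂ))).trace = 1/2 ∧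
        (ρAB * (P₂ ⊗ₖ (1 : Matrix (Fin dB) (Fin dB) ℂ))).trace = 1/2 ∧
        x = traceNorm ((2 : ℂ) • ptraceA (ρAB * (P₁ ⊗ₖ (1 : Matrix (Fin dB) (Fin dB) ℂ)))
          - (2 : ℂ) • ptraceA (ρAB * (P₂ ⊗ₖ (1 : Matrix (Fin dB) (Fin dB) ℂ)))) / 4 } := by
      refine ⟨Matrix.diagonal ![1, 0], Matrix.diagonal ![0, 1], ?_, ?_, ?_, ?_, ?_, ?_⟩
      · exact Matrix.PosSemidef.diagonal (by intro i; fin_cases i <;> simp)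
      · exact Matrix.PosSemidef.diagonal (by intro i; fin_cases i <;> simp)
      · ext i j
        fin_cases i <;> fin_cases j <;>
          simp [Matrix.diagonal, Matrix.one_apply]
      · rw [htr]; simp
      · rw [htr]; simp
      · have hD : (2 : ℂ) • ptraceA (ρAB * ((Matrix.diagonal ![1, 0] : Matrix (Fin 2) (Fin 2) ℂ)
              ⊗ₖ (1 : Matrix (Fin dB) (Fin dB) ℂ)))
            - (2 : ℂ) • ptraceA (ρAB * ((Matrix.diagonal ![0, 1] : Matrix (Fin 2) (Fin 2) ℂ)
              ⊗ₖ (1 : Matrix (Fin dB) (Fin dB) ℂ))) = ρ' - ρ'' := by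
          rw [hρ, CA2aux_ptraceA_formula, CA2aux_ptraceA_formula]
          ext i j
          simp only [Matrix.sub_apply, Matrix.smul_apply, Matrix.add_apply, smul_eq_mul,
            Matrix.diagonal_apply_eq]
          simp [Matrix.cons_val_zero, Matrix.cons_val_one]
        rw [hD]
    have hbdd : BddAbove { x : ℝ | ∃ P₁ P₂ : Matrix (Fin 2) (Fin 2) ℂ,
        P₁.PosSemidef ∧ P₂.PosSemidef ∧ P₁ + P₂ = 1 ∧
        (ρAB * (P₁ ⊗ₖ (1 : Matrix (Fin dB) (Fin dB) ℂ))).trace = 1/2 ∧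
        (ρAB * (P₂ ⊗ₖ (1 : Matrix (Fin dB) (Fin dB) ℂ))).trace = 1/2 ∧
        x = traceNorm ((2 : ℂ) • ptraceA (ρAB * (P₁ ⊗ₖ (1 : Matrix (Fin dB) (Fin dB) ℂ)))
          - (2 : ℂ) • ptraceA (ρAB * (P₂ ⊗ₖ (1 : Matrix (Fin dB) (Fin dB) ℂ)))) / 4 } := by
      refine ⟨traceNorm (ρ' - ρ'') / 4, ?_⟩
      rintro x ⟨P₁, P₂, hP₁, hP₂, hsum, ht1, ht2, hx⟩
      obtain ⟨_, _, hle⟩ := main P₁ P₂ hP₁ hP₂ hsum ht1 ht2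
      rw [hx]
      linarith
    exact le_csSup hbdd hmem
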